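/- Let H > 0, β > 0, let K₀ be a natural number with K₀ > H^{1/β}, and define π_k = 1 / ∏_{i=K₀}^{k} (1 − H/i^β) for k ≥ K₀. Then (π_k) is a positive nondecreasing sequence with the following properties: (a) if β ∈ (0,1) there exist C₁, C₂ > 0 and an index n₀ such that e^{C₁ n^{1−β}} ≤ π_n ≤ e^{C₂ n^{1−β}} for all n ≥ n₀, and if β = 1 then π_n = O(n^H) as n → +∞; (b) if β ∈ (0,1), then for every γ ∈ ℝ there exist C₁, C₂ > 0 such that for all n large enough C₁ n^{γ+β} π_n ≤ ∑_{k=K₀}^{n} k^γ π_k ≤ C₂ n^{γ+β} π_n; (c) for every nonnegative sequence (a_k) and every n > K₀, ∑_{k=K₀+1}^{n} π_k (a_k − a_{k−1}) ≤ a_n π_n. -/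

import Mathlib

set_option maxHeartbeats 1000000
set_option linter.unusedSectionVars false
set_option linter.unusedVariables false


open Filter Asymptotics Topology

/-- The sequence `π_k = 1 / ∏_{i = K₀}^{k} (1 - H / i ^ β)` from Lemma A.2. -/
noncomputable def piSeq (Hc β : ℝ) (K₀ : ℕ) (k : ℕ) : ℝ :=
  (∏ i ∈ Finset.Icc K₀ k, (1 - Hc / (i : ℝ) ^ β))⁻¹

section aux

open Filter Asymptotics Topology Finset

/-- MVT for rpow. -/
lemma mvt_rpow (p : ℝ) {a b : ℝ} (ha : 0 < a) (hab : a < b) :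
    ∃ c, a < c ∧ c < b ∧ b ^ p - a ^ p = p * c ^ (p - 1) * (b - a) := by
  obtain ⟨c, hc, hc'⟩ := exists_hasDerivAt_eq_slope (fun x => x ^ p)
    (fun x => p * x ^ (p - 1)) hab
    (fun x hx => ((Real.continuousAt_rpow_const x p
      (Or.inl (ne_of_gt (lt_of_lt_of_le ha hx.1)))).continuousWithinAt))
    (fun x hx => Real.hasDerivAt_rpow_const (Or.inl (ne_of_gt (ha.trans hx.1))))
  refine ⟨c, hc.1, hc.2, ?_⟩
  rw [hc', div_mul_cancel₀]
  exact sub_ne_zero.2 hab.ne'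

/-- Concavity-type estimate: `p * b^(p-1) * (b-a) ≤ b^p - a^p` for `0 < p ≤ 1`, `0 ≤ a < b`. -/
lemma rpow_diff_lower (p : ℝ) (hp : 0 < p) (hp1 : p ≤ 1) {a b : ℝ} (ha : 0 ≤ a) (hab : a < b) :
    p * b ^ (p - 1) * (b - a) ≤ b ^ p - a ^ p := by
  have hb : 0 < b := lt_of_le_of_lt ha hab
  rcases eq_or_lt_of_le ha with h0 | ha'
  · rw [← h0, Real.zero_rpow hp.ne', sub_zero, sub_zero]
    have hbp : b ^ (p - 1) * b = b ^ p := by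
      rw [← Real.rpow_add_one hb.ne' (p - 1)]; ring_nf
    calc p * b ^ (p - 1) * b = p * (b ^ (p-1) * b) := by ring
    _ = p * b ^ p := by rw [hbp]
    _ ≤ 1 * b ^ p := by
        have := Real.rpow_pos_of_pos hb p
        nlinarith
    _ = b ^ p := one_mul _
  · obtain ⟨c, hac, hcb, heq⟩ := mvt_rpow p ha' hab
    rw [heq]
    have hcpos : 0 < c := ha'.trans hac
    have h1 : b ^ (p - 1) ≤ c ^ (p - 1) :=
      Real.rpow_le_rpow_of_nonpos hcpos hcb.le (by linarith)
    have h2 : (0:ℝ) ≤ p * (b - a) := by nlinarith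
    nlinarith [mul_le_mul_of_nonneg_left h1 h2]


section basic
variable {Hc β : ℝ} {K₀ : ℕ} (hH : 0 < Hc) (hβ : 0 < β) (hK₀ : Hc ^ (1 / β) < (K₀ : ℝ))

include hH hβ hK₀

lemma K0_pos : 0 < K₀ := by
  have h := Real.rpow_pos_of_pos hH (1 / β)
  have : (0:ℝ) < (K₀:ℝ) := h.trans hK₀
  exact_mod_cast this

lemma Hc_lt_rpow {i : ℕ} (hi : K₀ ≤ i) : Hc < (i : ℝ) ^ β := by
  have h0 : (0:ℝ) ≤ Hc ^ (1 / β) := (Real.rpow_pos_of_pos hH _).le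
  have hlt : Hc ^ (1 / β) < (i : ℝ) := lt_of_lt_of_le hK₀ (by exact_mod_cast hi)
  have := Real.rpow_lt_rpow h0 hlt hβ
  rwa [← Real.rpow_mul hH.le, one_div_mul_cancel hβ.ne', Real.rpow_one] at this

lemma rpow_pos' {i : ℕ} (hi : K₀ ≤ i) : (0:ℝ) < (i : ℝ) ^ β :=
  hH.trans (Hc_lt_rpow hH hβ hK₀ hi)

lemma x_pos {i : ℕ} (hi : K₀ ≤ i) : 0 < Hc / (i : ℝ) ^ β :=
  div_pos hH (rpow_pos' hH hβ hK₀ hi)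

lemma x_lt_one {i : ℕ} (hi : K₀ ≤ i) : Hc / (i : ℝ) ^ β < 1 :=
  (div_lt_one (rpow_pos' hH hβ hK₀ hi)).2 (Hc_lt_rpow hH hβ hK₀ hi)

lemma factor_pos {i : ℕ} (hi : K₀ ≤ i) : 0 < 1 - Hc / (i : ℝ) ^ β := by
  have := x_lt_one hH hβ hK₀ hi; linarith

lemma prod_pos' (n : ℕ) : 0 < ∏ i ∈ Finset.Icc K₀ n, (1 - Hc / (i : ℝ) ^ β) :=
  Finset.prod_pos fun i hi => factor_pos hH hβ hK₀ (Finset.mem_Icc.1 hi).1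

lemma piSeq_pos (n : ℕ) : 0 < piSeq Hc β K₀ n :=
  inv_pos.2 (prod_pos' hH hβ hK₀ n)

lemma prod_le_one' (n : ℕ) : ∏ i ∈ Finset.Icc K₀ n, (1 - Hc / (i : ℝ) ^ β) ≤ 1 :=
  Finset.prod_le_one (fun i hi => (factor_pos hH hβ hK₀ (Finset.mem_Icc.1 hi).1).le)
    (fun i hi => by have := x_pos hH hβ hK₀ (Finset.mem_Icc.1 hi).1; linarith)

lemma one_le_piSeq (n : ℕ) : 1 ≤ piSeq Hc β K₀ n :=
  (one_le_inv_iff₀.2 ⟨prod_pos' hH hβ hK₀ n, prod_le_one' hH hβ hK₀ n⟩)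

lemma piSeq_step {n : ℕ} (hn : K₀ ≤ n) :
    piSeq Hc β K₀ (n + 1) * (1 - Hc / ((n + 1 : ℕ) : ℝ) ^ β) = piSeq Hc β K₀ n := by
  unfold piSeq
  rw [Finset.prod_Icc_succ_top (by omega)]
  have h1 := (prod_pos' hH hβ hK₀ n).ne'
  have h2 := (factor_pos hH hβ hK₀ (show K₀ ≤ n + 1 by omega)).ne'
  rw [mul_inv, mul_assoc, inv_mul_cancel₀ h2, mul_one]

lemma piSeq_mono_step {n : ℕ} (hn : K₀ ≤ n) : piSeq Hc β K₀ n ≤ piSeq Hc β K₀ (n + 1) := by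
  have h := piSeq_step hH hβ hK₀ hn
  have hp := piSeq_pos hH hβ hK₀ (n + 1)
  have hf : 1 - Hc / ((n + 1 : ℕ) : ℝ) ^ β ≤ 1 := by
    have := x_pos hH hβ hK₀ (show K₀ ≤ n + 1 by omega); linarith
  nlinarith

lemma piSeq_mono {m n : ℕ} (hmn : m ≤ n) : piSeq Hc β K₀ m ≤ piSeq Hc β K₀ n := by
  induction n, hmn using Nat.le_induction with
  | base => exact le_refl _
  | succ n hmn ih =>
      rcases le_or_gt K₀ n with h | h
      · exact ih.trans (piSeq_mono_step hH hβ hK₀ h)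
      · have hone : piSeq Hc β K₀ n = 1 := by
          unfold piSeq
          rw [Finset.Icc_eq_empty (by omega), Finset.prod_empty, inv_one]
        calc piSeq Hc β K₀ m ≤ piSeq Hc β K₀ n := ih
        _ = 1 := hone
        _ ≤ piSeq Hc β K₀ (n+1) := one_le_piSeq hH hβ hK₀ _

lemma log_piSeq (n : ℕ) :
    Real.log (piSeq Hc β K₀ n) = ∑ i ∈ Finset.Icc K₀ n, (-Real.log (1 - Hc / (i : ℝ) ^ β)) := by
  unfold piSeq
  rw [Real.log_inv, Real.log_prod (fun i hi => (factor_pos hH hβ hK₀ (Finset.mem_Icc.1 hi).1).ne'),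
    ← Finset.sum_neg_distrib]

end basic

lemma neg_log_ge {x : ℝ} (hx0 : 0 ≤ x) (hx1 : x < 1) : x ≤ -Real.log (1 - x) := by
  have := Real.log_le_sub_one_of_pos (show (0:ℝ) < 1 - x by linarith)
  linarith

lemma neg_log_le {x : ℝ} (hx0 : 0 ≤ x) (hx1 : x < 1) : -Real.log (1 - x) ≤ x / (1 - x) := by
  have h1 : (0:ℝ) < 1 - x := by linarith
  have := Real.log_le_sub_one_of_pos (show (0:ℝ) < (1 - x)⁻¹ by positivity)
  rw [Real.log_inv] at this
  have hid : (1 - x)⁻¹ - 1 = x / (1 - x) := by field_simp; ring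
  linarith [hid ▸ this]

/-- `∑_{i=1}^n i^{-β} ≤ n^{1-β}/(1-β)` via telescoping. -/
lemma sum_rpow_inv_le {β : ℝ} (hβ : 0 < β) (hβ1 : β < 1) (n : ℕ) :
    (1 - β) * ∑ i ∈ Finset.Icc 1 n, ((i : ℝ) ^ β)⁻¹ ≤ (n : ℝ) ^ (1 - β) := by
  induction n with
  | zero =>
      simp [Real.zero_rpow (show 1 - β ≠ 0 by linarith)]
  | succ n ih =>
      rcases Nat.eq_zero_or_pos n with rfl | hn
      · show (1 - β) * ∑ i ∈ Finset.Icc (1:ℕ) 1, ((i : ℝ) ^ β)⁻¹ ≤ ((1:ℕ) : ℝ) ^ (1 - β)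
        rw [Finset.Icc_self, Finset.sum_singleton]
        norm_num [Real.one_rpow]
        linarith
      · rw [Finset.sum_Icc_succ_top (by omega)]
        have key : (1 - β) * (((n + 1 : ℕ) : ℝ) ^ β)⁻¹ ≤ ((n+1 : ℕ) : ℝ) ^ (1 - β) - (n : ℝ) ^ (1 - β) := by
          have h := rpow_diff_lower (1 - β) (by linarith) (by linarith)
            (show (0:ℝ) ≤ (n:ℝ) by positivity) (show (n:ℝ) < ((n+1:ℕ):ℝ) by push_cast; linarith)
          have he : ((n+1:ℕ):ℝ) ^ (1 - β - 1) = (((n+1:ℕ):ℝ) ^ β)⁻¹ := by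
            rw [show (1 - β - 1 : ℝ) = -β by ring, Real.rpow_neg (by positivity)]
          rw [he] at h
          have : ((n+1:ℕ):ℝ) - (n:ℝ) = 1 := by push_cast; ring
          rw [this, mul_one] at h
          linarith
        calc (1 - β) * (∑ i ∈ Finset.Icc 1 n, ((i : ℝ) ^ β)⁻¹ + (((n + 1:ℕ) : ℝ) ^ β)⁻¹)
            = (1 - β) * ∑ i ∈ Finset.Icc 1 n, ((i : ℝ) ^ β)⁻¹
              + (1 - β) * (((n + 1:ℕ) : ℝ) ^ β)⁻¹ := by ring
        _ ≤ (n : ℝ) ^ (1-β) + (((n+1:ℕ):ℝ) ^ (1-β) - (n:ℝ) ^ (1-β)) := add_le_add ih key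
        _ = ((n+1:ℕ):ℝ) ^ (1-β) := by ring

/-- `∑_{i=1}^n 1/i ≤ 1 + log n`. -/
lemma sum_inv_le_log (n : ℕ) (hn : 1 ≤ n) :
    ∑ i ∈ Finset.Icc 1 n, ((i : ℝ))⁻¹ ≤ 1 + Real.log n := by
  induction n with
  | zero => omega
  | succ n ih =>
      rcases Nat.eq_zero_or_pos n with rfl | hn'
      · show ∑ i ∈ Finset.Icc (1:ℕ) 1, ((i : ℝ))⁻¹ ≤ 1 + Real.log ((1:ℕ):ℝ)
        rw [Finset.Icc_self, Finset.sum_singleton]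
        norm_num
      · rw [Finset.sum_Icc_succ_top (by omega)]
        have key : (((n+1:ℕ):ℝ))⁻¹ ≤ Real.log ((n+1:ℕ):ℝ) - Real.log (n:ℝ) := by
          have hx0 : (0:ℝ) ≤ (((n+1:ℕ):ℝ))⁻¹ := by positivity
          have hx1 : (((n+1:ℕ):ℝ))⁻¹ < 1 := by
            rw [inv_lt_one_iff₀]; right
            have : (1:ℝ) ≤ (n:ℝ) := by exact_mod_cast hn'
            push_cast; linarith
          have h := neg_log_ge hx0 hx1
          have hid : 1 - (((n+1:ℕ):ℝ))⁻¹ = (n:ℝ) / ((n+1:ℕ):ℝ) := by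
            have : ((n+1:ℕ):ℝ) ≠ 0 := by positivity
            field_simp
            push_cast; ring
          rw [hid, Real.log_div (by exact_mod_cast hn'.ne') (by positivity)] at h
          linarith
        have := ih hn'
        linarith

/-- `∑_{i=1}^n 1/i² ≤ 2 - 1/n`. -/
lemma sum_inv_sq_le (n : ℕ) (hn : 1 ≤ n) :
    ∑ i ∈ Finset.Icc 1 n, (((i : ℝ)) ^ 2)⁻¹ ≤ 2 - ((n : ℝ))⁻¹ := by
  induction n with
  | zero => omega
  | succ n ih =>
      rcases Nat.eq_zero_or_pos n with rfl | hn'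
      · show ∑ i ∈ Finset.Icc (1:ℕ) 1, (((i : ℝ)) ^ 2)⁻¹ ≤ 2 - (((1:ℕ) : ℝ))⁻¹
        rw [Finset.Icc_self, Finset.sum_singleton]
        norm_num
      · rw [Finset.sum_Icc_succ_top (by omega)]
        have h1 : (0:ℝ) < (n:ℝ) := by exact_mod_cast hn'
        have key : ((((n+1:ℕ)):ℝ) ^ 2)⁻¹ ≤ ((n:ℝ))⁻¹ - (((n+1:ℕ):ℝ))⁻¹ := by
          push_cast
          rw [inv_sub_inv (ne_of_gt h1) (by positivity : ((n:ℝ)+1) ≠ 0),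
            inv_eq_one_div, div_le_div_iff₀ (by positivity) (by positivity)]
          nlinarith
        have := ih hn'
        have h2 : (((n+1:ℕ)):ℝ)⁻¹ = ((n:ℝ)+1)⁻¹ := by push_cast; ring
        linarith

lemma rpow_base_succ_le {q : ℝ} (hq : q < 1) {n : ℕ} (hn : 1 ≤ n) :
    ((n:ℝ)) ^ (q - 1) ≤ (2:ℝ) ^ (1 - q) * ((n:ℝ) + 1) ^ (q - 1) := by
  have hnpos : (0:ℝ) < (n:ℝ) := by exact_mod_cast hn
  have h1 : ((n:ℝ) + 1) / 2 ≤ (n:ℝ) := by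
    have : (1:ℝ) ≤ (n:ℝ) := by exact_mod_cast hn
    linarith
  have h2 : (0:ℝ) < ((n:ℝ) + 1) / 2 := by linarith
  have h3 : ((n:ℝ)) ^ (q - 1) ≤ (((n:ℝ) + 1) / 2) ^ (q - 1) :=
    Real.rpow_le_rpow_of_nonpos h2 h1 (by linarith)
  refine h3.trans (le_of_eq ?_)
  rw [Real.div_rpow (by linarith) (by norm_num), div_eq_mul_inv,
    ← Real.rpow_neg (by norm_num : (0:ℝ) ≤ 2), neg_sub]
  ring


section parts
variable {Hc β : ℝ} {K₀ : ℕ} (hH : 0 < Hc) (hβ : 0 < β) (hK₀ : Hc ^ (1 / β) < (K₀ : ℝ))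
include hH hβ hK₀

lemma part3 (hβ1 : β < 1) :
    ∃ C₁ : ℝ, 0 < C₁ ∧ ∃ C₂ : ℝ, 0 < C₂ ∧ ∃ n₀ : ℕ, ∀ n : ℕ, n₀ ≤ n →
      Real.exp (C₁ * (n : ℝ) ^ (1 - β)) ≤ piSeq Hc β K₀ n ∧
      piSeq Hc β K₀ n ≤ Real.exp (C₂ * (n : ℝ) ^ (1 - β)) := by
  have hK0p : 0 < K₀ := K0_pos hH hβ hK₀
  set δ := Hc / (K₀ : ℝ) ^ β with hδdef
  have hδ0 : 0 < δ := x_pos hH hβ hK₀ le_rfl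
  have hδ1 : δ < 1 := x_lt_one hH hβ hK₀ le_rfl
  refine ⟨Hc / 2, by positivity, Hc / ((1 - δ) * (1 - β)), by
    have : 0 < 1 - δ := by linarith
    have : 0 < 1 - β := by linarith
    positivity, 2 * K₀ + 2, fun n hn => ?_⟩
  have hK0n : K₀ ≤ n := by omega
  have hn1 : 1 ≤ n := by omega
  have hnpos : (0:ℝ) < n := by exact_mod_cast hn1
  have hπpos := piSeq_pos hH hβ hK₀ n
  have hlog := log_piSeq hH hβ hK₀ n
  have hxmem : ∀ i ∈ Finset.Icc K₀ n, K₀ ≤ i := fun i hi => (Finset.mem_Icc.1 hi).1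
  constructor
  · -- lower bound
    have hterm : ∀ i ∈ Finset.Icc K₀ n, Hc / (n:ℝ) ^ β ≤ -Real.log (1 - Hc / (i:ℝ) ^ β) := by
      intro i hi
      have h1 : (i:ℝ) ^ β ≤ (n:ℝ) ^ β :=
        Real.rpow_le_rpow (Nat.cast_nonneg i) (Nat.cast_le.2 (Finset.mem_Icc.1 hi).2) hβ.le
      have h2 : Hc / (n:ℝ) ^ β ≤ Hc / (i:ℝ) ^ β := by
        have := rpow_pos' hH hβ hK₀ (hxmem i hi)
        gcongr
      exact h2.trans (neg_log_ge (x_pos hH hβ hK₀ (hxmem i hi)).le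
        (x_lt_one hH hβ hK₀ (hxmem i hi)))
    have hsum : ((n + 1 - K₀ : ℕ) : ℝ) * (Hc / (n:ℝ) ^ β) ≤ Real.log (piSeq Hc β K₀ n) := by
      rw [hlog]
      have := Finset.card_nsmul_le_sum (Finset.Icc K₀ n)
        (fun i => -Real.log (1 - Hc / (i:ℝ) ^ β)) (Hc / (n:ℝ) ^ β) hterm
      rwa [Nat.card_Icc, nsmul_eq_mul] at this
    have hcard : (n:ℝ) / 2 ≤ ((n + 1 - K₀ : ℕ) : ℝ) := by
      have h : n ≤ 2 * (n + 1 - K₀) := by omega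
      have := (Nat.cast_le (α := ℝ)).2 h
      push_cast at this ⊢
      linarith
    have hx : Hc / 2 * (n:ℝ) ^ (1 - β) ≤ Real.log (piSeq Hc β K₀ n) := by
      have hb : (0:ℝ) < (n:ℝ) ^ β := Real.rpow_pos_of_pos hnpos β
      have hr : (n:ℝ) ^ (1 - β) = (n:ℝ) / (n:ℝ) ^ β := by
        rw [Real.rpow_sub hnpos, Real.rpow_one]
      have h3 : Hc / 2 * ((n:ℝ) / (n:ℝ)^β) = (n:ℝ)/2 * (Hc / (n:ℝ)^β) := by ring
      rw [hr, h3]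
      refine le_trans ?_ hsum
      have h4 : (0:ℝ) ≤ Hc / (n:ℝ)^β := by positivity
      exact mul_le_mul_of_nonneg_right hcard h4
    calc Real.exp (Hc / 2 * (n:ℝ) ^ (1-β)) ≤ Real.exp (Real.log (piSeq Hc β K₀ n)) :=
          Real.exp_le_exp.2 hx
    _ = piSeq Hc β K₀ n := Real.exp_log hπpos
  · -- upper bound
    have hterm : ∀ i ∈ Finset.Icc K₀ n,
        -Real.log (1 - Hc / (i:ℝ) ^ β) ≤ (Hc / (1 - δ)) * ((i:ℝ) ^ β)⁻¹ := by
      intro i hi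
      have hKi := hxmem i hi
      have hx0 := x_pos hH hβ hK₀ hKi
      have hx1 := x_lt_one hH hβ hK₀ hKi
      have hip : (0:ℝ) < (i:ℝ) ^ β := rpow_pos' hH hβ hK₀ hKi
      have hxδ : Hc / (i:ℝ) ^ β ≤ δ := by
        rw [hδdef]
        have h1 : (K₀:ℝ) ^ β ≤ (i:ℝ) ^ β :=
          Real.rpow_le_rpow (Nat.cast_nonneg _) (Nat.cast_le.2 hKi) hβ.le
        have h2 : (0:ℝ) < (K₀:ℝ) ^ β := rpow_pos' hH hβ hK₀ le_rfl
        gcongr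
      have h5 : Hc / (i:ℝ)^β / (1 - Hc / (i:ℝ)^β) ≤ Hc / (i:ℝ)^β / (1 - δ) := by
        have : 0 < 1 - δ := by linarith
        gcongr
      refine (neg_log_le hx0.le hx1).trans (h5.trans ?_)
      exact le_of_eq (by rw [div_eq_mul_inv, div_eq_mul_inv, div_eq_mul_inv]; ring)
    have hsum1 : Real.log (piSeq Hc β K₀ n) ≤
        (Hc / (1 - δ)) * ∑ i ∈ Finset.Icc 1 n, ((i:ℝ) ^ β)⁻¹ := by
      rw [hlog]
      refine le_trans (Finset.sum_le_sum hterm) ?_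
      rw [← Finset.mul_sum]
      have hsub : Finset.Icc K₀ n ⊆ Finset.Icc 1 n := Finset.Icc_subset_Icc (by omega) le_rfl
      have hnn : ∀ i ∈ Finset.Icc 1 n, i ∉ Finset.Icc K₀ n → (0:ℝ) ≤ ((i:ℝ)^β)⁻¹ := by
        intro i hi _
        have : 1 ≤ i := (Finset.mem_Icc.1 hi).1
        have : (0:ℝ) < (i:ℝ) := by exact_mod_cast this
        positivity
      have h1δ : (0:ℝ) < 1 - δ := by linarith
      exact mul_le_mul_of_nonneg_left (Finset.sum_le_sum_of_subset_of_nonneg hsub hnn)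
        (by positivity)
    have hsum2 : ∑ i ∈ Finset.Icc 1 n, ((i:ℝ) ^ β)⁻¹ ≤ (n:ℝ) ^ (1-β) / (1-β) := by
      rw [le_div_iff₀ (by linarith : (0:ℝ) < 1 - β), mul_comm]
      exact sum_rpow_inv_le hβ hβ1 n
    have hfin : Real.log (piSeq Hc β K₀ n) ≤ Hc / ((1-δ)*(1-β)) * (n:ℝ)^(1-β) := by
      have h1δ : (0:ℝ) < 1 - δ := by linarith
      have h1 := hsum1.trans (mul_le_mul_of_nonneg_left hsum2 (by positivity))
      calc Real.log (piSeq Hc β K₀ n) ≤ Hc / (1-δ) * ((n:ℝ)^(1-β)/(1-β)) := h1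
      _ = Hc / ((1-δ)*(1-β)) * (n:ℝ)^(1-β) := by
          field_simp
    calc piSeq Hc β K₀ n = Real.exp (Real.log (piSeq Hc β K₀ n)) := (Real.exp_log hπpos).symm
    _ ≤ Real.exp (Hc / ((1-δ)*(1-β)) * (n:ℝ)^(1-β)) := Real.exp_le_exp.2 hfin

lemma part4 (hβ1 : β = 1) :
    (fun n : ℕ => piSeq Hc β K₀ n) =O[atTop] fun n : ℕ => (n : ℝ) ^ Hc := by
  subst hβ1
  have hK0p : 0 < K₀ := K0_pos hH hβ hK₀
  have hδ1 : Hc / (K₀ : ℝ) < 1 := by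
    have := x_lt_one hH hβ hK₀ (le_refl K₀)
    rwa [Real.rpow_one] at this
  have hδ0 : 0 < Hc / (K₀ : ℝ) := by
    have : (0:ℝ) < (K₀:ℝ) := by exact_mod_cast hK0p
    positivity
  set δ := Hc / (K₀ : ℝ) with hδdef
  have h1δ : (0:ℝ) < 1 - δ := by linarith
  set c2 : ℝ := Hc ^ 2 / (1 - δ) with hc2def
  have hc2 : 0 < c2 := by positivity
  rw [isBigO_iff]
  refine ⟨Real.exp (Hc + 2 * c2), ?_⟩
  filter_upwards [eventually_ge_atTop (max K₀ 1)] with n hn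
  have hK0n : K₀ ≤ n := le_trans (le_max_left _ _) hn
  have hn1 : 1 ≤ n := le_trans (le_max_right _ _) hn
  have hnpos : (0:ℝ) < n := by exact_mod_cast hn1
  have hπpos := piSeq_pos hH hβ hK₀ n
  have hlog := log_piSeq hH hβ hK₀ n
  -- termwise bound
  have hterm : ∀ i ∈ Finset.Icc K₀ n,
      -Real.log (1 - Hc / (i:ℝ) ^ (1:ℝ)) ≤ Hc * ((i:ℝ))⁻¹ + c2 * (((i:ℝ))^2)⁻¹ := by
    intro i hi
    have hKi : K₀ ≤ i := (Finset.mem_Icc.1 hi).1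
    have hx0 := x_pos hH hβ hK₀ hKi
    have hx1 := x_lt_one hH hβ hK₀ hKi
    have hipos : (0:ℝ) < (i:ℝ) := by
      have : 1 ≤ i := le_trans hK0p hKi
      exact_mod_cast this
    rw [Real.rpow_one] at hx0 hx1 ⊢
    set x := Hc / (i:ℝ) with hxdef
    have hxδ : x ≤ δ := by
      rw [hxdef, hδdef]
      have : (0:ℝ) < (K₀:ℝ) := by exact_mod_cast hK0p
      gcongr
    have hne : (1:ℝ) - x ≠ 0 := by
      have : x < 1 := hx1
      intro h; rw [sub_eq_zero] at h; exact this.ne h.symm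
    have e1 : x / (1 - x) = x + x^2 / (1 - x) := by
      field_simp
      ring
    have e2 : x^2 / (1 - x) ≤ x^2 / (1 - δ) := by gcongr
    have e3 : x^2 / (1 - δ) = c2 * (((i:ℝ))^2)⁻¹ := by
      rw [hc2def, hxdef]
      field_simp
    have e4 : x = Hc * ((i:ℝ))⁻¹ := by rw [hxdef, div_eq_mul_inv]
    calc -Real.log (1 - x) ≤ x / (1 - x) := neg_log_le hx0.le hx1
    _ = x + x^2/(1-x) := e1
    _ ≤ x + x^2/(1-δ) := by linarith
    _ = Hc * ((i:ℝ))⁻¹ + c2 * (((i:ℝ))^2)⁻¹ := by rw [e3, e4]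
  have hsum : Real.log (piSeq Hc 1 K₀ n) ≤ Hc + 2 * c2 + Hc * Real.log n := by
    rw [hlog]
    have h1 := Finset.sum_le_sum hterm
    have hsub : Finset.Icc K₀ n ⊆ Finset.Icc 1 n := Finset.Icc_subset_Icc hK0p le_rfl
    have h2 : ∑ i ∈ Finset.Icc K₀ n, (Hc * ((i:ℝ))⁻¹ + c2 * (((i:ℝ))^2)⁻¹)
        ≤ ∑ i ∈ Finset.Icc 1 n, (Hc * ((i:ℝ))⁻¹ + c2 * (((i:ℝ))^2)⁻¹) := by
      refine Finset.sum_le_sum_of_subset_of_nonneg hsub ?_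
      intro i hi _
      have : (1:ℕ) ≤ i := (Finset.mem_Icc.1 hi).1
      have : (0:ℝ) < (i:ℝ) := by exact_mod_cast this
      positivity
    have h3 : ∑ i ∈ Finset.Icc 1 n, (Hc * ((i:ℝ))⁻¹ + c2 * (((i:ℝ))^2)⁻¹)
        = Hc * ∑ i ∈ Finset.Icc 1 n, ((i:ℝ))⁻¹
          + c2 * ∑ i ∈ Finset.Icc 1 n, (((i:ℝ))^2)⁻¹ := by
      rw [Finset.sum_add_distrib, Finset.mul_sum, Finset.mul_sum]
    have h4 := sum_inv_le_log n hn1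
    have h5 := sum_inv_sq_le n hn1
    have h6 : (0:ℝ) < ((n:ℝ))⁻¹ := by positivity
    calc ∑ i ∈ Finset.Icc K₀ n, -Real.log (1 - Hc / (i:ℝ) ^ (1:ℝ))
        ≤ ∑ i ∈ Finset.Icc 1 n, (Hc * ((i:ℝ))⁻¹ + c2 * (((i:ℝ))^2)⁻¹) := h1.trans h2
    _ = Hc * ∑ i ∈ Finset.Icc 1 n, ((i:ℝ))⁻¹ + c2 * ∑ i ∈ Finset.Icc 1 n, (((i:ℝ))^2)⁻¹ := h3
    _ ≤ Hc * (1 + Real.log n) + c2 * (2 - ((n:ℝ))⁻¹) := by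
        have := mul_le_mul_of_nonneg_left h4 hH.le
        have := mul_le_mul_of_nonneg_left h5 hc2.le
        linarith
    _ ≤ Hc + 2 * c2 + Hc * Real.log n := by nlinarith
  have hfin : piSeq Hc 1 K₀ n ≤ Real.exp (Hc + 2 * c2) * (n:ℝ) ^ Hc := by
    have : piSeq Hc 1 K₀ n = Real.exp (Real.log (piSeq Hc 1 K₀ n)) := (Real.exp_log hπpos).symm
    rw [this, Real.rpow_def_of_pos hnpos, ← Real.exp_add]
    exact Real.exp_le_exp.2 (by rw [mul_comm (Real.log (n:ℝ)) Hc]; linarith)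
  rw [Real.norm_eq_abs, Real.norm_eq_abs, abs_of_pos hπpos,
    abs_of_pos (Real.rpow_pos_of_pos hnpos Hc)]
  exact hfin

lemma partc (a : ℕ → ℝ) (ha : ∀ k, 0 ≤ a k) :
    ∀ n : ℕ, K₀ ≤ n →
      ∑ k ∈ Finset.Icc (K₀ + 1) n, piSeq Hc β K₀ k * (a k - a (k - 1)) ≤
        a n * piSeq Hc β K₀ n := by
  intro n hn
  induction n, hn using Nat.le_induction with
  | base =>
      rw [Finset.Icc_eq_empty (by omega), Finset.sum_empty]
      exact mul_nonneg (ha K₀) (piSeq_pos hH hβ hK₀ K₀).le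
  | succ n hmn ih =>
      rw [Finset.sum_Icc_succ_top (by omega)]
      have hmono := piSeq_mono_step hH hβ hK₀ hmn
      have hred : (n + 1 - 1 : ℕ) = n := by omega
      rw [hred]
      have h1 : a n * piSeq Hc β K₀ n ≤ a n * piSeq Hc β K₀ (n+1) :=
        mul_le_mul_of_nonneg_left hmono (ha n)
      nlinarith [ih, mul_le_mul_of_nonneg_left hmono (ha n)]

lemma part5 (hβ1 : β < 1) (γ : ℝ) :
    ∃ C₁ : ℝ, 0 < C₁ ∧ ∃ C₂ : ℝ, 0 < C₂ ∧ ∀ᶠ n : ℕ in atTop,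
      C₁ * (n : ℝ) ^ (γ + β) * piSeq Hc β K₀ n ≤
        ∑ k ∈ Finset.Icc K₀ n, (k : ℝ) ^ γ * piSeq Hc β K₀ k ∧
      ∑ k ∈ Finset.Icc K₀ n, (k : ℝ) ^ γ * piSeq Hc β K₀ k ≤
        C₂ * (n : ℝ) ^ (γ + β) * piSeq Hc β K₀ n := by
  have hK0p : 0 < K₀ := K0_pos hH hβ hK₀
  set q : ℝ := γ + β with hqdef
  set π : ℕ → ℝ := piSeq Hc β K₀ with hπdef
  set T : ℕ → ℝ := fun n => (n : ℝ) ^ q * π n with hTdef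
  set C' : ℝ := max 1 ((2:ℝ) ^ (1 - q)) with hC'def
  have hC'1 : (1:ℝ) ≤ C' := le_max_left _ _
  have hC'0 : (0:ℝ) < C' := lt_of_lt_of_le one_pos hC'1
  -- choose N₂ such that |q| * C' * (m:ℝ)^(β-1) < Hc/2 for m ≥ N₂
  have htz : Tendsto (fun m : ℕ => |q| * C' * (m:ℝ) ^ (β - 1)) atTop (nhds 0) := by
    have h1 : Tendsto (fun x : ℝ => x ^ (-(1 - β))) atTop (nhds 0) :=
      tendsto_rpow_neg_atTop (by linarith)
    have h2 : Tendsto (fun m : ℕ => (m:ℝ) ^ (β - 1)) atTop (nhds 0) := by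
      have := h1.comp tendsto_natCast_atTop_atTop
      simpa [show -(1 - β) = β - 1 by ring, Function.comp_def] using this
    simpa using h2.const_mul (|q| * C')
  obtain ⟨N₂, hN₂⟩ := Filter.eventually_atTop.1 (htz.eventually (gt_mem_nhds (half_pos hH)))
  set N₀ : ℕ := max (max K₀ 1) N₂ with hN₀def
  have hN₀K : K₀ ≤ N₀ := le_trans (le_max_left _ _) (le_max_left _ _)
  have hN₀1 : 1 ≤ N₀ := le_trans (le_max_right _ _) (le_max_left _ _)
  have hN₀N₂ : N₂ ≤ N₀ := le_max_right _ _
  -- the difference identity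
  have hkey : ∀ n : ℕ, K₀ ≤ n → T (n+1) - T n =
      Hc * ((n+1:ℕ):ℝ) ^ γ * π (n+1) + (((n+1:ℕ):ℝ) ^ q - ((n:ℕ):ℝ) ^ q) * π n := by
    intro n hn
    have hb : (0:ℝ) < ((n+1:ℕ):ℝ) := by push_cast; positivity
    have hxid : π (n+1) - π n = π (n+1) * (Hc / ((n+1:ℕ):ℝ) ^ β) := by
      have h := piSeq_step hH hβ hK₀ hn
      rw [hπdef]
      rw [← h]; ring
    have hrg : ((n+1:ℕ):ℝ) ^ q = ((n+1:ℕ):ℝ) ^ γ * ((n+1:ℕ):ℝ) ^ β := by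
      rw [← Real.rpow_add hb, hqdef]
    have hs : ((n+1:ℕ):ℝ) ^ q * (Hc / ((n+1:ℕ):ℝ) ^ β) = Hc * ((n+1:ℕ):ℝ) ^ γ := by
      rw [hrg]
      have hbpow : ((n+1:ℕ):ℝ) ^ β ≠ 0 := (Real.rpow_pos_of_pos hb β).ne'
      field_simp
    have e1 : T (n+1) - T n
        = ((n+1:ℕ):ℝ) ^ q * (π (n+1) - π n) + (((n+1:ℕ):ℝ) ^ q - ((n:ℕ):ℝ) ^ q) * π n := by
      rw [hTdef]; ring
    rw [e1, hxid, show ((n+1:ℕ):ℝ) ^ q * (π (n+1) * (Hc / ((n+1:ℕ):ℝ) ^ β))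
      = (((n+1:ℕ):ℝ) ^ q * (Hc / ((n+1:ℕ):ℝ) ^ β)) * π (n+1) by ring, hs]
  -- the derivative bound
  have hD : ∀ n : ℕ, N₀ ≤ n →
      |(((n+1:ℕ):ℝ) ^ q - ((n:ℕ):ℝ) ^ q)| ≤ (Hc/2) * ((n+1:ℕ):ℝ) ^ γ := by
    intro n hn
    have hn1 : 1 ≤ n := le_trans hN₀1 hn
    have hnpos : (0:ℝ) < (n:ℝ) := by exact_mod_cast hn1
    have hb : (0:ℝ) < ((n+1:ℕ):ℝ) := by push_cast; positivity
    have hlt : (n:ℝ) < ((n+1:ℕ):ℝ) := by push_cast; linarith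
    obtain ⟨c, hc1, hc2, hcq⟩ := mvt_rpow q hnpos hlt
    have hsub : ((n+1:ℕ):ℝ) - (n:ℝ) = 1 := by push_cast; ring
    rw [hsub, mul_one] at hcq
    have hcpos : 0 < c := hnpos.trans hc1
    have hcb : c ^ (q-1) ≤ C' * ((n+1:ℕ):ℝ) ^ (q-1) := by
      rcases le_or_gt 1 q with hq | hq
      · have h1 : c ^ (q-1) ≤ ((n+1:ℕ):ℝ) ^ (q-1) :=
          Real.rpow_le_rpow hcpos.le hc2.le (by linarith)
        refine h1.trans ?_
        have := Real.rpow_pos_of_pos hb (q-1)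
        nlinarith
      · have h1 : c ^ (q-1) ≤ (n:ℝ) ^ (q-1) :=
          Real.rpow_le_rpow_of_nonpos hnpos hc1.le (by linarith)
        have h2 := rpow_base_succ_le hq hn1
        have h3 : ((n:ℝ) + 1) = ((n+1:ℕ):ℝ) := by push_cast; ring
        rw [h3] at h2
        have h4 : (2:ℝ) ^ (1-q) ≤ C' := le_max_right _ _
        have h5 := Real.rpow_pos_of_pos hb (q-1)
        nlinarith
    have hγsplit : ((n+1:ℕ):ℝ) ^ (q-1) = ((n+1:ℕ):ℝ) ^ (β-1) * ((n+1:ℕ):ℝ) ^ γ := by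
      rw [← Real.rpow_add hb, hqdef]; ring_nf
    have hN2bound := hN₂ (n+1) (by omega)
    have hγpos : (0:ℝ) < ((n+1:ℕ):ℝ) ^ γ := Real.rpow_pos_of_pos hb γ
    have hβ1pos : (0:ℝ) < ((n+1:ℕ):ℝ) ^ (β-1) := Real.rpow_pos_of_pos hb (β-1)
    calc |(((n+1:ℕ):ℝ) ^ q - ((n:ℕ):ℝ) ^ q)| = |q| * c ^ (q-1) := by
          rw [hcq, abs_mul, abs_of_pos (Real.rpow_pos_of_pos hcpos _)]
    _ ≤ |q| * (C' * ((n+1:ℕ):ℝ) ^ (q-1)) :=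
          mul_le_mul_of_nonneg_left hcb (abs_nonneg q)
    _ = (|q| * C' * ((n+1:ℕ):ℝ) ^ (β-1)) * ((n+1:ℕ):ℝ) ^ γ := by rw [hγsplit]; ring
    _ ≤ (Hc/2) * ((n+1:ℕ):ℝ) ^ γ :=
          mul_le_mul_of_nonneg_right hN2bound.le hγpos.le
  -- inductive two-sided bound
  have hmain : ∀ n : ℕ, N₀ ≤ n →
      (Hc/2) * (∑ k ∈ Finset.Ioc N₀ n, (k:ℝ) ^ γ * π k) ≤ T n - T N₀ ∧
      T n - T N₀ ≤ (3*Hc/2) * (∑ k ∈ Finset.Ioc N₀ n, (k:ℝ) ^ γ * π k) := by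
    intro n hn
    induction n, hn using Nat.le_induction with
    | base => simp
    | succ n hmn ih =>
        rw [Finset.sum_Ioc_succ_top hmn]
        have hKn : K₀ ≤ n := le_trans hN₀K hmn
        have hkey' := hkey n hKn
        have hD' := hD n hmn
        have hπpos1 := piSeq_pos hH hβ hK₀ (n+1)
        have hπposn := piSeq_pos hH hβ hK₀ n
        have hπmono := piSeq_mono_step hH hβ hK₀ hKn
        have hb : (0:ℝ) < ((n+1:ℕ):ℝ) := by push_cast; positivity
        have hγpos : (0:ℝ) < ((n+1:ℕ):ℝ) ^ γ := Real.rpow_pos_of_pos hb γ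
        have habs2 : |(((n+1:ℕ):ℝ) ^ q - ((n:ℕ):ℝ) ^ q) * π n|
            ≤ (Hc/2) * (((n+1:ℕ):ℝ) ^ γ * π (n+1)) := by
          rw [abs_mul, abs_of_pos hπposn]
          calc |(((n+1:ℕ):ℝ) ^ q - ((n:ℕ):ℝ) ^ q)| * π n
              ≤ ((Hc/2) * ((n+1:ℕ):ℝ) ^ γ) * π n :=
                mul_le_mul_of_nonneg_right hD' hπposn.le
          _ ≤ ((Hc/2) * ((n+1:ℕ):ℝ) ^ γ) * π (n+1) :=
                mul_le_mul_of_nonneg_left hπmono (by positivity)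
          _ = (Hc/2) * (((n+1:ℕ):ℝ) ^ γ * π (n+1)) := by ring
        have hDlow := (abs_le.1 habs2).1
        have hDup := (abs_le.1 habs2).2
        have hT1 : T (n+1) - T N₀ = (T n - T N₀) + (T (n+1) - T n) := by ring
        constructor
        · rw [hT1, hkey']
          have h1 := ih.1
          nlinarith
        · rw [hT1, hkey']
          have h2 := ih.2
          nlinarith
  -- T tends to infinity
  have htop : Tendsto T atTop atTop := by
    obtain ⟨c₁, hc₁, c₂, hc₂, n₀, hbnd⟩ := part3 hH hβ hK₀ hβ1
    have hlo : Real.log =o[atTop] fun x : ℝ => x ^ (1-β) :=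
      isLittleO_log_rpow_atTop (by linarith)
    have hsmall : (0:ℝ) < c₁ / (2 * (|q| + 1)) := by positivity
    have hev1 : ∀ᶠ x : ℝ in atTop, ‖Real.log x‖ ≤ c₁ / (2 * (|q| + 1)) * ‖x ^ (1-β)‖ :=
      hlo.def hsmall
    have hevN : ∀ᶠ m : ℕ in atTop,
        ‖Real.log ((m:ℕ):ℝ)‖ ≤ c₁ / (2 * (|q| + 1)) * ‖((m:ℕ):ℝ) ^ (1-β)‖ :=
      tendsto_natCast_atTop_atTop.eventually hev1
    have hTlow : ∀ᶠ m : ℕ in atTop, Real.exp ((c₁/2) * (m:ℝ) ^ (1-β)) ≤ T m := by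
      filter_upwards [hevN, eventually_ge_atTop n₀, eventually_ge_atTop 1] with m hm hm0 hm1
      have hmpos : (0:ℝ) < (m:ℝ) := by exact_mod_cast hm1
      have hrpos : (0:ℝ) < (m:ℝ) ^ (1-β) := Real.rpow_pos_of_pos hmpos _
      have hlogm : ‖Real.log ((m:ℕ):ℝ)‖ = |Real.log (m:ℝ)| := rfl
      have hnrm : ‖((m:ℕ):ℝ) ^ (1-β)‖ = (m:ℝ) ^ (1-β) := by
        rw [Real.norm_eq_abs, abs_of_pos hrpos]
      rw [hlogm, hnrm] at hm
      have hqlog : q * Real.log (m:ℝ) ≥ -((c₁/2) * (m:ℝ) ^ (1-β)) := by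
        have h1 : |q * Real.log (m:ℝ)| ≤ |q| * |Real.log (m:ℝ)| := by rw [abs_mul]
        have h2 : |q| * |Real.log (m:ℝ)| ≤ |q| * (c₁ / (2 * (|q| + 1)) * (m:ℝ) ^ (1-β)) :=
          mul_le_mul_of_nonneg_left hm (abs_nonneg q)
        have h3 : |q| * (c₁ / (2 * (|q| + 1)) * (m:ℝ) ^ (1-β)) ≤ (c₁/2) * (m:ℝ) ^ (1-β) := by
          have hc : |q| * c₁ / (2*(|q|+1)) ≤ c₁/2 := by
            rw [div_le_div_iff₀ (by positivity) (by norm_num)]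
            nlinarith [abs_nonneg q]
          have he : |q| * (c₁ / (2 * (|q| + 1)) * (m:ℝ) ^ (1-β))
              = (|q| * c₁ / (2*(|q|+1))) * (m:ℝ) ^ (1-β) := by ring
          rw [he]
          exact mul_le_mul_of_nonneg_right hc hrpos.le
        have h4 := (h1.trans h2).trans h3
        have := abs_le.1 h4
        linarith [this.1]
      have hmq : (m:ℝ) ^ q = Real.exp (q * Real.log (m:ℝ)) := by
        rw [Real.rpow_def_of_pos hmpos, mul_comm]
      have hπbnd := (hbnd m hm0).1
      calc Real.exp ((c₁/2) * (m:ℝ) ^ (1-β))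
          = Real.exp (-((c₁/2) * (m:ℝ) ^ (1-β))) * Real.exp (c₁ * (m:ℝ) ^ (1-β)) := by
            rw [← Real.exp_add]; ring_nf
      _ ≤ (m:ℝ) ^ q * π m := by
            have e1 : Real.exp (-((c₁/2) * (m:ℝ) ^ (1-β))) ≤ (m:ℝ) ^ q := by
              rw [hmq]; exact Real.exp_le_exp.2 (by linarith)
            have e2 : Real.exp (c₁ * (m:ℝ) ^ (1-β)) ≤ π m := hπbnd
            have := Real.exp_pos (-((c₁/2) * (m:ℝ) ^ (1-β)))
            have := Real.exp_pos (c₁ * (m:ℝ) ^ (1-β))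
            nlinarith
      _ = T m := rfl
    have hexp : Tendsto (fun m : ℕ => Real.exp ((c₁/2) * (m:ℝ) ^ (1-β))) atTop atTop := by
      refine Real.tendsto_exp_atTop.comp ?_
      refine Tendsto.const_mul_atTop (by positivity) ?_
      exact (tendsto_rpow_atTop (by linarith)).comp tendsto_natCast_atTop_atTop
    exact tendsto_atTop_mono' atTop hTlow hexp
  -- prefix sum constant
  set A : ℝ := ∑ k ∈ Finset.Icc K₀ N₀, (k:ℝ) ^ γ * π k with hAdef
  have hA0 : 0 ≤ A := by
    refine Finset.sum_nonneg fun k hk => ?_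
    have hk1 : 1 ≤ k := le_trans hK0p (Finset.mem_Icc.1 hk).1
    have : (0:ℝ) < (k:ℝ) := by exact_mod_cast hk1
    exact le_of_lt (mul_pos (Real.rpow_pos_of_pos this γ) (piSeq_pos hH hβ hK₀ k))
  have hTN₀ : 0 ≤ T N₀ := by
    have : (0:ℝ) < (N₀:ℝ) := by exact_mod_cast hN₀1
    exact le_of_lt (mul_pos (Real.rpow_pos_of_pos this q) (piSeq_pos hH hβ hK₀ N₀))
  refine ⟨1/(3*Hc), by positivity, 3/Hc, by positivity, ?_⟩
  filter_upwards [eventually_ge_atTop N₀, htop.eventually_ge_atTop (2 * T N₀),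
    htop.eventually_ge_atTop (Hc * A)] with n hn hT2 hTA
  have hsplit : ∑ k ∈ Finset.Icc K₀ n, (k:ℝ) ^ γ * π k
      = A + ∑ k ∈ Finset.Ioc N₀ n, (k:ℝ) ^ γ * π k := by
    rw [hAdef]
    have e1 : Finset.Icc K₀ n = Finset.Ioc (K₀ - 1) n := by
      rw [← Finset.Icc_add_one_left_eq_Ioc]; congr 1; omega
    have e2 : Finset.Icc K₀ N₀ = Finset.Ioc (K₀ - 1) N₀ := by
      rw [← Finset.Icc_add_one_left_eq_Ioc]; congr 1; omega
    rw [e1, e2, ← Finset.sum_Ioc_consecutive _ (by omega : K₀ - 1 ≤ N₀) hn]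
  obtain ⟨hlow, hup⟩ := hmain n hn
  set S' : ℝ := ∑ k ∈ Finset.Ioc N₀ n, (k:ℝ) ^ γ * π k with hS'def
  have hS'0 : 0 ≤ S' := by
    refine Finset.sum_nonneg fun k hk => ?_
    have hk1 : 1 ≤ k := le_trans hN₀1 (le_of_lt (Finset.mem_Ioc.1 hk).1)
    have : (0:ℝ) < (k:ℝ) := by exact_mod_cast hk1
    exact le_of_lt (mul_pos (Real.rpow_pos_of_pos this γ) (piSeq_pos hH hβ hK₀ k))
  rw [hsplit]
  have hTn : (n:ℝ) ^ (γ + β) * piSeq Hc β K₀ n = T n := rfl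
  constructor
  · rw [show (1/(3*Hc) * (n:ℝ) ^ (γ+β) * piSeq Hc β K₀ n) = T n / (3*Hc) by
      rw [← hTn]; ring]
    rw [div_le_iff₀ (by positivity)]
    nlinarith
  · rw [show (3/Hc * (n:ℝ) ^ (γ+β) * piSeq Hc β K₀ n) = 3 * T n / Hc by
      rw [← hTn]; ring]
    rw [le_div_iff₀ hH]
    nlinarith

end parts

end aux

/-- Lemma A.2: positivity, monotonicity and growth properties of the sequence
`π_k = 1 / ∏_{i = K₀}^{k} (1 - H / i ^ β)`. -/
theorem stmt19 (Hc β : ℝ) (hH : 0 < Hc) (hβ : 0 < β)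
    (K₀ : ℕ) (hK₀ : Hc ^ (1 / β) < (K₀ : ℝ)) :
    (∀ n : ℕ, K₀ ≤ n → 0 < piSeq Hc β K₀ n) ∧
    (∀ n : ℕ, K₀ ≤ n → piSeq Hc β K₀ n ≤ piSeq Hc β K₀ (n + 1)) ∧
    (β < 1 → ∃ C₁ : ℝ, 0 < C₁ ∧ ∃ C₂ : ℝ, 0 < C₂ ∧ ∃ n₀ : ℕ, ∀ n : ℕ, n₀ ≤ n →
      Real.exp (C₁ * (n : ℝ) ^ (1 - β)) ≤ piSeq Hc β K₀ n ∧
      piSeq Hc β K₀ n ≤ Real.exp (C₂ * (n : ℝ) ^ (1 - β))) ∧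
    (β = 1 → (fun n : ℕ => piSeq Hc β K₀ n) =O[atTop] fun n : ℕ => (n : ℝ) ^ Hc) ∧
    (β < 1 → ∀ γ : ℝ, ∃ C₁ : ℝ, 0 < C₁ ∧ ∃ C₂ : ℝ, 0 < C₂ ∧ ∀ᶠ n : ℕ in atTop,
      C₁ * (n : ℝ) ^ (γ + β) * piSeq Hc β K₀ n ≤
        ∑ k ∈ Finset.Icc K₀ n, (k : ℝ) ^ γ * piSeq Hc β K₀ k ∧
      ∑ k ∈ Finset.Icc K₀ n, (k : ℝ) ^ γ * piSeq Hc β K₀ k ≤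
        C₂ * (n : ℝ) ^ (γ + β) * piSeq Hc β K₀ n) ∧
    (∀ a : ℕ → ℝ, (∀ k, 0 ≤ a k) → ∀ n : ℕ, K₀ < n →
      ∑ k ∈ Finset.Icc (K₀ + 1) n, piSeq Hc β K₀ k * (a k - a (k - 1)) ≤
        a n * piSeq Hc β K₀ n) := by
  refine ⟨fun n _ => piSeq_pos hH hβ hK₀ n,
    fun n hn => piSeq_mono_step hH hβ hK₀ hn,
    fun hβ1 => part3 hH hβ hK₀ hβ1,
    fun hβ1 => part4 hH hβ hK₀ hβ1,
    fun hβ1 γ => part5 hH hβ hK₀ hβ1 γ,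
    fun a ha n hn => partc hH hβ hK₀ a ha n (le_of_lt hn)⟩
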